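/- arXiv:1511.09056 — 2 statements merged into one kernel-verified Lean document; each statement's English description precedes it below -/
import Mathlib

section
/- Let f be a C^3 real function on an open interval U on which f is a diffeomorphism onto its image, with negative Schwarzian derivative Sf < 0 throughout U. Then for every point of U there is a neighborhood such that for all intervals M compactly contained in T with T contained in that neighborhood, the cross-ratio distortion satisfies D(f;M,T) < 1. -/
open Set Filter MeasureTheory

noncomputable section

/-- The Schwarzian derivative `Sf = (f''/f')' - (1/2) (f''/f')^2`. -/
def schwarzianDeriv (f : ℝ → ℝ) (x : ℝ) : ℝ :=
  deriv (fun y => deriv (deriv f) y / deriv f y) x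
    - (1 / 2) * (deriv (deriv f) x / deriv f x) ^ 2

/-- The cross-ratio `b(M,T) = |L||R| / (|L ∪ M| |M ∪ R|)` of the pair of intervals
`M = [m₁, m₂] ⋐ T = [t₁, t₂]`. -/
def crossRatioB (t₁ m₁ m₂ t₂ : ℝ) : ℝ :=
  ((m₁ - t₁) * (t₂ - m₂)) / ((m₂ - t₁) * (t₂ - m₁))

/-- The cross-ratio distortion `D(f; M, T) = b(f(M), f(T)) / b(M, T)`. -/
def crDistortion (f : ℝ → ℝ) (t₁ m₁ m₂ t₂ : ℝ) : ℝ :=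
  crossRatioB (f t₁) (f m₁) (f m₂) (f t₂) / crossRatioB t₁ m₁ m₂ t₂

lemma crDistortion_neg (f : ℝ → ℝ) (t₁ m₁ m₂ t₂ : ℝ) :
    crDistortion (fun x => -f x) t₁ m₁ m₂ t₂ = crDistortion f t₁ m₁ m₂ t₂ := by
  unfold crDistortion crossRatioB
  ring_nf

set_option maxHeartbeats 2000000 in
/-- The main analytic lemma: if `f1, f2, f3` are the successive derivatives of `f` on an
open convex set `V`, `f1 > 0` on `V`, and the Schwarzian inequality
`f3 * f1 < (3/2) f2 ^ 2` holds on `V`, then `f` contracts the `b`-cross-ratio of any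
admissible quadruple inside `V`. -/
lemma key_crossratio_lemma (f f1 f2 f3 : ℝ → ℝ) (V : Set ℝ)
    (hVopen : IsOpen V) (hVconv : Convex ℝ V)
    (hdf : ∀ x ∈ V, HasDerivAt f (f1 x) x)
    (hdf1 : ∀ x ∈ V, HasDerivAt f1 (f2 x) x)
    (hdf2 : ∀ x ∈ V, HasDerivAt f2 (f3 x) x)
    (hpos : ∀ x ∈ V, 0 < f1 x)
    (hSineq : ∀ x ∈ V, f3 x * f1 x < 3 / 2 * (f2 x) ^ 2) :
    ∀ t₁ m₁ m₂ t₂ : ℝ, t₁ < m₁ → m₁ < m₂ → m₂ < t₂ → Set.Icc t₁ t₂ ⊆ V →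
      crDistortion f t₁ m₁ m₂ t₂ < 1 := by
  -- the auxiliary function g = f1 ^ (-1/2), strictly convex on V
  set g : ℝ → ℝ := fun x => f1 x ^ (-(1 / 2) : ℝ) with hgdef
  set g1 : ℝ → ℝ := fun x => f2 x * (-(1 / 2) : ℝ) * f1 x ^ (-(1 / 2) - 1 : ℝ) with hg1def
  have hgpos : ∀ x ∈ V, 0 < g x := fun x hx => Real.rpow_pos_of_pos (hpos x hx) _
  have hdg : ∀ x ∈ V, HasDerivAt g (g1 x) x := fun x hx =>
    (hdf1 x hx).rpow_const (Or.inl (hpos x hx).ne')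
  have hdg1 : ∀ x ∈ V, HasDerivAt g1
      ((f3 x * (-(1 / 2) : ℝ)) * f1 x ^ (-(1 / 2) - 1 : ℝ)
        + (f2 x * (-(1 / 2) : ℝ)) * (f2 x * (-(1 / 2) - 1 : ℝ) * f1 x ^ (-(1 / 2) - 1 - 1 : ℝ))) x := by
    intro x hx
    exact ((hdf2 x hx).mul_const (-(1 / 2) : ℝ)).mul
      ((hdf1 x hx).rpow_const (Or.inl (hpos x hx).ne'))
  have hG2pos : ∀ x ∈ V, 0 <
      (f3 x * (-(1 / 2) : ℝ)) * f1 x ^ (-(1 / 2) - 1 : ℝ)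
        + (f2 x * (-(1 / 2) : ℝ)) * (f2 x * (-(1 / 2) - 1 : ℝ) * f1 x ^ (-(1 / 2) - 1 - 1 : ℝ)) := by
    intro x hx
    have h1 := hpos x hx
    have h2 := hSineq x hx
    have e35 : f1 x ^ (-(1 / 2) - 1 : ℝ) = f1 x * f1 x ^ (-(1 / 2) - 1 - 1 : ℝ) := by
      have h := Real.rpow_add h1 1 (-(1 / 2) - 1 - 1 : ℝ)
      rw [Real.rpow_one] at h
      rw [← h]
      norm_num
    have h5 : (0 : ℝ) < f1 x ^ (-(1 / 2) - 1 - 1 : ℝ) := Real.rpow_pos_of_pos h1 _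
    have hb : (0 : ℝ) < 3 / 4 * (f2 x) ^ 2 - 1 / 2 * (f3 x * f1 x) := by linarith
    rw [e35]
    nlinarith [mul_pos h5 hb]
  have hg1mono : StrictMonoOn g1 V := by
    apply strictMonoOn_of_deriv_pos hVconv
    · exact fun x hx => (hdg1 x hx).differentiableAt.continuousAt.continuousWithinAt
    · intro x hx
      rw [hVopen.interior_eq] at hx
      rw [(hdg1 x hx).deriv]
      exact hG2pos x hx
  have hfmono : StrictMonoOn f V := by
    apply strictMonoOn_of_deriv_pos hVconv
    · exact fun x hx => (hdf x hx).differentiableAt.continuousAt.continuousWithinAt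
    · intro x hx
      rw [hVopen.interior_eq] at hx
      rw [(hdf x hx).deriv]
      exact hpos x hx
  -- tangent line inequality for the strictly convex g
  have htan : ∀ y ∈ V, ∀ u ∈ V, u ≠ y → g y + g1 y * (u - y) < g u := by
    intro y hy u hu hne
    rcases lt_or_gt_of_ne hne with h | h
    · have hsub : Icc u y ⊆ V := hVconv.ordConnected.out hu hy
      obtain ⟨z, hz, hzeq⟩ := exists_hasDerivAt_eq_slope g g1 h
        (fun x hx => (hdg x (hsub hx)).differentiableAt.continuousAt.continuousWithinAt)
        (fun x hx => hdg x (hsub (Ioo_subset_Icc_self hx)))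
      have hzlt : g1 z < g1 y := hg1mono (hsub ⟨hz.1.le, hz.2.le⟩) hy hz.2
      rw [hzeq] at hzlt
      rw [div_lt_iff₀ (by linarith : (0:ℝ) < y - u)] at hzlt
      nlinarith [hzlt]
    · have hsub : Icc y u ⊆ V := hVconv.ordConnected.out hy hu
      obtain ⟨z, hz, hzeq⟩ := exists_hasDerivAt_eq_slope g g1 h
        (fun x hx => (hdg x (hsub hx)).differentiableAt.continuousAt.continuousWithinAt)
        (fun x hx => hdg x (hsub (Ioo_subset_Icc_self hx)))
      have hzgt : g1 y < g1 z := hg1mono hy (hsub ⟨hz.1.le, hz.2.le⟩) hz.1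
      rw [hzeq] at hzgt
      rw [lt_div_iff₀ (by linarith : (0:ℝ) < u - y)] at hzgt
      nlinarith [hzgt]
  -- relation f1 = 1 / g²
  have hgsq : ∀ x ∈ V, f1 x * (g x * g x) = 1 := by
    intro x hx
    have h1 := hpos x hx
    have h : g x * g x = f1 x ^ ((-(1 / 2) : ℝ) + (-(1 / 2) : ℝ)) :=
      (Real.rpow_add h1 _ _).symm
    rw [h, show ((-(1 / 2) : ℝ) + (-(1 / 2) : ℝ)) = -1 by norm_num, Real.rpow_neg_one,
      mul_inv_cancel₀ h1.ne']
  -- the integral bound, left version: t < y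
  have hbound : ∀ y ∈ V, ∀ t ∈ V, t < y →
      (f y - f t) * (g y * (g y + g1 y * (t - y))) < y - t := by
    intro y hy t ht hlt
    have hIcc : Icc t y ⊆ V := hVconv.ordConnected.out ht hy
    have hA : 0 < f y - f t := sub_pos.2 (hfmono ht hy hlt)
    have hc : 0 < g y := hgpos y hy
    rcases le_or_gt (g y + g1 y * (t - y)) 0 with hl0 | hl0
    · nlinarith [mul_pos hA hc]
    · set c := g y with hcdef
      set s := g1 y with hsdef
      set l : ℝ → ℝ := fun x => c + s * (x - y) with hldef
      have hlt0 : (0:ℝ) < l t := hl0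
      have hlpos : ∀ x ∈ Icc t y, 0 < l x := by
        intro x hx
        show 0 < c + s * (x - y)
        rcases le_or_gt 0 s with hs | hs
        · nlinarith [mul_nonneg hs (sub_nonneg.2 hx.1), hl0, hc]
        · nlinarith [mul_nonneg (neg_nonneg.2 hs.le) (sub_nonneg.2 hx.2), hl0, hc]
      have hf1cont : ContinuousOn f1 (Icc t y) := fun x hx =>
        (hdf1 x (hIcc hx)).differentiableAt.continuousAt.continuousWithinAt
      have hfint : (∫ x in t..y, f1 x) = f y - f t :=
        intervalIntegral.integral_eq_sub_of_hasDerivAt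
          (fun x hx => hdf x (hIcc (by rwa [Set.uIcc_of_le hlt.le] at hx)))
          (hf1cont.intervalIntegrable_of_Icc hlt.le)
      have hlcont : Continuous l := by
        rw [hldef]; exact continuous_const.add (continuous_const.mul (continuous_id.sub continuous_const))
      have hcont : ContinuousOn (fun x => ((l x) ^ 2)⁻¹) (Icc t y) := by
        apply ContinuousOn.inv₀ ((hlcont.pow 2).continuousOn)
        intro x hx
        exact (pow_pos (hlpos x hx) 2).ne'
      have hFder : ∀ x ∈ Icc t y, HasDerivAt (fun w => (w - y) / (c * l w)) (((l x) ^ 2)⁻¹) x := by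
        intro x hx
        have hlx := hlpos x hx
        have hdl : HasDerivAt l s x := by
          rw [hldef]
          simpa using (((hasDerivAt_id x).sub_const y).const_mul s).const_add c
        have h := ((hasDerivAt_id x).sub_const y).div (hdl.const_mul c)
          (by positivity : c * l x ≠ 0)
        refine h.congr_deriv ?_
        symm
        have hlxne : l x ≠ 0 := hlx.ne'
        have hcne : c ≠ 0 := hc.ne'
        have hlval : l x = c + s * (x - y) := by rw [hldef]
        rw [hlval] at hlxne ⊢
        simp only [id_eq]
        field_simp
        ring
      have hlint : (∫ x in t..y, ((l x) ^ 2)⁻¹) = (y - t) / (c * l t) := by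
        rw [intervalIntegral.integral_eq_sub_of_hasDerivAt
          (fun x hx => hFder x (by rwa [Set.uIcc_of_le hlt.le] at hx))
          (hcont.intervalIntegrable_of_Icc hlt.le)]
        rw [sub_self, zero_div, zero_sub, show t - y = -(y - t) by ring, neg_div, neg_neg]
      have hcomp : ∀ x ∈ Icc t y, f1 x ≤ ((l x) ^ 2)⁻¹ ∧ (x ≠ y → f1 x < ((l x) ^ 2)⁻¹) := by
        intro x hx
        have hxV : x ∈ V := hIcc hx
        have hlx := hlpos x hx
        have hgx := hgpos x hxV
        have hf1x : f1 x * (g x * g x) = 1 := hgsq x hxV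
        have hstrict : x ≠ y → f1 x < ((l x) ^ 2)⁻¹ := by
          intro hne
          have hlg : l x < g x := htan y hy x hxV hne
          have h2 : l x ^ 2 < g x * g x := by nlinarith
          rw [← one_div, lt_div_iff₀ (pow_pos hlx 2)]
          calc f1 x * l x ^ 2 < f1 x * (g x * g x) :=
                mul_lt_mul_of_pos_left h2 (hpos x hxV)
            _ = 1 := hf1x
        refine ⟨?_, hstrict⟩
        rcases eq_or_ne x y with hxy | hne
        · have hlx_eq : l x = g x := by rw [hldef, hxy]; simp [hcdef]
          have h9 : f1 x * (l x) ^ 2 = 1 := by rw [hlx_eq, pow_two]; exact hf1x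
          rw [← one_div, le_div_iff₀ (pow_pos hlx 2)]
          linarith
        · exact (hstrict hne).le
      have hint_lt : f y - f t < (y - t) / (c * l t) := by
        rw [← hfint, ← hlint]
        exact intervalIntegral.integral_lt_integral_of_continuousOn_of_le_of_exists_lt hlt
          hf1cont hcont (fun x hx => (hcomp x (Ioc_subset_Icc_self hx)).1)
          ⟨t, ⟨le_refl t, hlt.le⟩, (hcomp t ⟨le_refl t, hlt.le⟩).2 (ne_of_lt hlt)⟩
      rw [lt_div_iff₀ (mul_pos hc hlt0)] at hint_lt
      calc (f y - f t) * (g y * (g y + g1 y * (t - y))) = (f y - f t) * (c * l t) := by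
            rw [hldef]
        _ < y - t := hint_lt
  -- the integral bound, right version: y < t
  have hbound' : ∀ y ∈ V, ∀ t ∈ V, y < t →
      (f t - f y) * (g y * (g y + g1 y * (t - y))) < t - y := by
    intro y hy t ht hlt
    have hIcc : Icc y t ⊆ V := hVconv.ordConnected.out hy ht
    have hA : 0 < f t - f y := sub_pos.2 (hfmono hy ht hlt)
    have hc : 0 < g y := hgpos y hy
    rcases le_or_gt (g y + g1 y * (t - y)) 0 with hl0 | hl0
    · nlinarith [mul_pos hA hc]
    · set c := g y with hcdef
      set s := g1 y with hsdef
      set l : ℝ → ℝ := fun x => c + s * (x - y) with hldef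
      have hlt0 : (0:ℝ) < l t := hl0
      have hlpos : ∀ x ∈ Icc y t, 0 < l x := by
        intro x hx
        show 0 < c + s * (x - y)
        rcases le_or_gt 0 s with hs | hs
        · nlinarith [mul_nonneg hs (sub_nonneg.2 hx.1), hl0, hc]
        · nlinarith [mul_nonneg (neg_nonneg.2 hs.le) (sub_nonneg.2 hx.2), hl0, hc]
      have hf1cont : ContinuousOn f1 (Icc y t) := fun x hx =>
        (hdf1 x (hIcc hx)).differentiableAt.continuousAt.continuousWithinAt
      have hfint : (∫ x in y..t, f1 x) = f t - f y :=
        intervalIntegral.integral_eq_sub_of_hasDerivAt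
          (fun x hx => hdf x (hIcc (by rwa [Set.uIcc_of_le hlt.le] at hx)))
          (hf1cont.intervalIntegrable_of_Icc hlt.le)
      have hlcont : Continuous l := by
        rw [hldef]; exact continuous_const.add (continuous_const.mul (continuous_id.sub continuous_const))
      have hcont : ContinuousOn (fun x => ((l x) ^ 2)⁻¹) (Icc y t) := by
        apply ContinuousOn.inv₀ ((hlcont.pow 2).continuousOn)
        intro x hx
        exact (pow_pos (hlpos x hx) 2).ne'
      have hFder : ∀ x ∈ Icc y t, HasDerivAt (fun w => (w - y) / (c * l w)) (((l x) ^ 2)⁻¹) x := by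
        intro x hx
        have hlx := hlpos x hx
        have hdl : HasDerivAt l s x := by
          rw [hldef]
          simpa using (((hasDerivAt_id x).sub_const y).const_mul s).const_add c
        have h := ((hasDerivAt_id x).sub_const y).div (hdl.const_mul c)
          (by positivity : c * l x ≠ 0)
        refine h.congr_deriv ?_
        symm
        have hlxne : l x ≠ 0 := hlx.ne'
        have hcne : c ≠ 0 := hc.ne'
        have hlval : l x = c + s * (x - y) := by rw [hldef]
        rw [hlval] at hlxne ⊢
        simp only [id_eq]
        field_simp
        ring
      have hlint : (∫ x in y..t, ((l x) ^ 2)⁻¹) = (t - y) / (c * l t) := by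
        rw [intervalIntegral.integral_eq_sub_of_hasDerivAt
          (fun x hx => hFder x (by rwa [Set.uIcc_of_le hlt.le] at hx))
          (hcont.intervalIntegrable_of_Icc hlt.le)]
        rw [sub_self, zero_div, sub_zero]
      have hcomp : ∀ x ∈ Icc y t, f1 x ≤ ((l x) ^ 2)⁻¹ ∧ (x ≠ y → f1 x < ((l x) ^ 2)⁻¹) := by
        intro x hx
        have hxV : x ∈ V := hIcc hx
        have hlx := hlpos x hx
        have hgx := hgpos x hxV
        have hf1x : f1 x * (g x * g x) = 1 := hgsq x hxV
        have hstrict : x ≠ y → f1 x < ((l x) ^ 2)⁻¹ := by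
          intro hne
          have hlg : l x < g x := htan y hy x hxV hne
          have h2 : l x ^ 2 < g x * g x := by nlinarith
          rw [← one_div, lt_div_iff₀ (pow_pos hlx 2)]
          calc f1 x * l x ^ 2 < f1 x * (g x * g x) :=
                mul_lt_mul_of_pos_left h2 (hpos x hxV)
            _ = 1 := hf1x
        refine ⟨?_, hstrict⟩
        rcases eq_or_ne x y with hxy | hne
        · have hlx_eq : l x = g x := by rw [hldef, hxy]; simp [hcdef]
          have h9 : f1 x * (l x) ^ 2 = 1 := by rw [hlx_eq, pow_two]; exact hf1x
          rw [← one_div, le_div_iff₀ (pow_pos hlx 2)]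
          linarith
        · exact (hstrict hne).le
      have hint_lt : f t - f y < (t - y) / (c * l t) := by
        rw [← hfint, ← hlint]
        exact intervalIntegral.integral_lt_integral_of_continuousOn_of_le_of_exists_lt hlt
          hf1cont hcont (fun x hx => (hcomp x (Ioc_subset_Icc_self hx)).1)
          ⟨t, ⟨hlt.le, le_refl t⟩, (hcomp t ⟨hlt.le, le_refl t⟩).2 (ne_of_gt hlt)⟩
      rw [lt_div_iff₀ (mul_pos hc hlt0)] at hint_lt
      calc (f t - f y) * (g y * (g y + g1 y * (t - y))) = (f t - f y) * (c * l t) := by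
            rw [hldef]
        _ < t - y := hint_lt
  -- main part
  intro t₁ m₁ m₂ t₂ h01 h12 h23 hsub
  have ht1 : t₁ ∈ V := hsub ⟨le_refl _, by linarith⟩
  have ht2 : t₂ ∈ V := hsub ⟨by linarith, le_refl _⟩
  have hm1 : m₁ ∈ V := hsub ⟨by linarith, by linarith⟩
  have hm2 : m₂ ∈ V := hsub ⟨by linarith, by linarith⟩
  -- the three-point inequality
  have hkey : ∀ y ∈ Ioo t₁ t₂, (f y - f t₁) * ((f t₂ - f y) * (t₂ - t₁))
      < f1 y * ((f t₂ - f t₁) * ((y - t₁) * (t₂ - y))) := by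
    intro y hy
    have hyV : y ∈ V := hsub ⟨hy.1.le, hy.2.le⟩
    have hApos : 0 < f y - f t₁ := sub_pos.2 (hfmono ht1 hyV hy.1)
    have hBpos : 0 < f t₂ - f y := sub_pos.2 (hfmono hyV ht2 hy.2)
    have hA := hbound y hyV t₁ ht1 hy.1
    have hB := hbound' y hyV t₂ ht2 hy.2
    have hf1y : f1 y * (g y * g y) = 1 := hgsq y hyV
    have h1 := mul_lt_mul_of_pos_right hA
      (mul_pos hBpos (by linarith [hy.2] : (0:ℝ) < t₂ - y))
    have h2 := mul_lt_mul_of_pos_right hB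
      (mul_pos hApos (by linarith [hy.1] : (0:ℝ) < y - t₁))
    have hmain : g y * g y * ((f y - f t₁) * ((f t₂ - f y) * (t₂ - t₁)))
        < (f t₂ - f t₁) * ((y - t₁) * (t₂ - y)) := by nlinarith [h1, h2]
    have heq : f1 y * (g y * g y * ((f y - f t₁) * ((f t₂ - f y) * (t₂ - t₁))))
        = (f y - f t₁) * ((f t₂ - f y) * (t₂ - t₁)) := by
      calc f1 y * (g y * g y * ((f y - f t₁) * ((f t₂ - f y) * (t₂ - t₁))))
          = (f1 y * (g y * g y)) * ((f y - f t₁) * ((f t₂ - f y) * (t₂ - t₁))) := by ring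
        _ = 1 * ((f y - f t₁) * ((f t₂ - f y) * (t₂ - t₁))) := by rw [hf1y]
        _ = (f y - f t₁) * ((f t₂ - f y) * (t₂ - t₁)) := one_mul _
    calc (f y - f t₁) * ((f t₂ - f y) * (t₂ - t₁))
        = f1 y * (g y * g y * ((f y - f t₁) * ((f t₂ - f y) * (t₂ - t₁)))) := heq.symm
      _ < f1 y * ((f t₂ - f t₁) * ((y - t₁) * (t₂ - y))) :=
          mul_lt_mul_of_pos_left hmain (hpos y hyV)
  -- the auxiliary monotone quantity ψ
  set ψ : ℝ → ℝ := fun y => ((f y - f t₁) * (t₂ - y)) / ((y - t₁) * (f t₂ - f y)) with hψdef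
  have hψder : ∀ y ∈ Ioo t₁ t₂, HasDerivAt ψ
      (((f1 y * (t₂ - y) + (f y - f t₁) * -1) * ((y - t₁) * (f t₂ - f y))
        - (f y - f t₁) * (t₂ - y) * (1 * (f t₂ - f y) + (y - t₁) * -f1 y))
        / ((y - t₁) * (f t₂ - f y)) ^ 2) y := by
    intro y hy
    have hyV : y ∈ V := hsub ⟨hy.1.le, hy.2.le⟩
    have hdenpos : 0 < (y - t₁) * (f t₂ - f y) :=
      mul_pos (by linarith [hy.1]) (sub_pos.2 (hfmono hyV ht2 hy.2))
    have hd1 : HasDerivAt (fun w => (f w - f t₁) * (t₂ - w))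
        (f1 y * (t₂ - y) + (f y - f t₁) * -1) y :=
      ((hdf y hyV).sub_const (f t₁)).mul ((hasDerivAt_id y).const_sub t₂)
    have hd2 : HasDerivAt (fun w => (w - t₁) * (f t₂ - f w))
        (1 * (f t₂ - f y) + (y - t₁) * -f1 y) y :=
      ((hasDerivAt_id y).sub_const t₁).mul ((hdf y hyV).const_sub (f t₂))
    exact hd1.div hd2 hdenpos.ne'
  have hψmono : StrictMonoOn ψ (Icc m₁ m₂) := by
    apply strictMonoOn_of_deriv_pos (convex_Icc m₁ m₂)
    · intro y hy
      have hy' : y ∈ Ioo t₁ t₂ := ⟨by linarith [hy.1], by linarith [hy.2]⟩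
      exact (hψder y hy').differentiableAt.continuousAt.continuousWithinAt
    · intro y hy
      rw [interior_Icc] at hy
      have hy' : y ∈ Ioo t₁ t₂ := ⟨by linarith [hy.1], by linarith [hy.2]⟩
      have hyV : y ∈ V := hsub ⟨hy'.1.le, hy'.2.le⟩
      have hdenpos : 0 < (y - t₁) * (f t₂ - f y) :=
        mul_pos (by linarith [hy'.1]) (sub_pos.2 (hfmono hyV ht2 hy'.2))
      rw [(hψder y hy').deriv]
      apply div_pos
      · have hk := hkey y hy'
        nlinarith [hk]
      · exact pow_pos hdenpos 2
  have hψlt : ψ m₁ < ψ m₂ :=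
    hψmono (left_mem_Icc.2 h12.le) (right_mem_Icc.2 h12.le) h12
  -- positivity facts
  have p1 : 0 < f m₁ - f t₁ := sub_pos.2 (hfmono ht1 hm1 h01)
  have p2 : 0 < f m₂ - f t₁ := sub_pos.2 (hfmono ht1 hm2 (by linarith))
  have p3 : 0 < f t₂ - f m₁ := sub_pos.2 (hfmono hm1 ht2 (by linarith))
  have p4 : 0 < f t₂ - f m₂ := sub_pos.2 (hfmono hm2 ht2 h23)
  have q1 : (0:ℝ) < m₁ - t₁ := by linarith
  have q2 : (0:ℝ) < m₂ - t₁ := by linarith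
  have q3 : (0:ℝ) < t₂ - m₁ := by linarith
  have q4 : (0:ℝ) < t₂ - m₂ := by linarith
  have hψ2pos : 0 < ψ m₂ := by
    rw [hψdef]
    exact div_pos (mul_pos p2 q4) (mul_pos q2 p4)
  have hDeq : crDistortion f t₁ m₁ m₂ t₂ = ψ m₁ / ψ m₂ := by
    rw [hψdef]
    unfold crDistortion crossRatioB
    field_simp [p1.ne', p2.ne', p3.ne', p4.ne', q1.ne', q2.ne', q3.ne', q4.ne']
  rw [hDeq, div_lt_one hψ2pos]
  exact hψlt

/-- A `C³` diffeomorphism with negative Schwarzian derivative contracts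
the cross-ratio of all sufficiently small pairs of intervals: around every point of `U`
there is a neighborhood `V` such that `D(f; M, T) < 1` whenever `M ⋐ T ⊆ V`. -/
theorem negative_schwarzian_contracts_small_cross_ratios
    (f : ℝ → ℝ) (U : Set ℝ) (hUopen : IsOpen U) (hUconn : U.OrdConnected)
    (hf : ContDiffOn ℝ 3 f U) (hinj : Set.InjOn f U)
    (hdiffeo : ∀ x ∈ U, deriv f x ≠ 0)
    (hS : ∀ x ∈ U, schwarzianDeriv f x < 0) :
    ∀ x ∈ U, ∃ V ∈ nhds x, V ⊆ U ∧
      ∀ t₁ m₁ m₂ t₂ : ℝ, t₁ < m₁ → m₁ < m₂ → m₂ < t₂ → Set.Icc t₁ t₂ ⊆ V →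
        crDistortion f t₁ m₁ m₂ t₂ < 1 := by
  intro x hx
  have hC1 : ContDiffOn ℝ 2 (deriv f) U := hf.deriv_of_isOpen hUopen (by norm_num)
  have hC2 : ContDiffOn ℝ 1 (deriv (deriv f)) U := hC1.deriv_of_isOpen hUopen (by norm_num)
  have hdf : ∀ z ∈ U, HasDerivAt f (deriv f z) z := fun z hz =>
    ((hf.differentiableOn (by norm_num)).differentiableAt (hUopen.mem_nhds hz)).hasDerivAt
  have hdf1 : ∀ z ∈ U, HasDerivAt (deriv f) (deriv (deriv f) z) z := fun z hz =>
    ((hC1.differentiableOn (by norm_num)).differentiableAt (hUopen.mem_nhds hz)).hasDerivAt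
  have hdf2 : ∀ z ∈ U, HasDerivAt (deriv (deriv f)) (deriv (deriv (deriv f)) z) z := fun z hz =>
    ((hC2.differentiableOn (by norm_num)).differentiableAt (hUopen.mem_nhds hz)).hasDerivAt
  have hSineq : ∀ z ∈ U, deriv (deriv (deriv f)) z * deriv f z
      < 3 / 2 * (deriv (deriv f) z) ^ 2 := by
    intro z hz
    have h := hS z hz
    unfold schwarzianDeriv at h
    have hne : deriv f z ≠ 0 := hdiffeo z hz
    have hdd : deriv (fun y => deriv (deriv f) y / deriv f y) z
        = (deriv (deriv (deriv f)) z * deriv f z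
            - deriv (deriv f) z * deriv (deriv f) z) / (deriv f z) ^ 2 :=
      deriv_div (hdf2 z hz).differentiableAt (hdf1 z hz).differentiableAt hne
    rw [hdd] at h
    have h1 : (0:ℝ) < (deriv f z) ^ 2 := by positivity
    have h2 := mul_neg_of_neg_of_pos h h1
    have h3 : ((deriv (deriv (deriv f)) z * deriv f z
          - deriv (deriv f) z * deriv (deriv f) z) / (deriv f z) ^ 2
          - 1 / 2 * (deriv (deriv f) z / deriv f z) ^ 2) * (deriv f z) ^ 2
        = deriv (deriv (deriv f)) z * deriv f z - 3 / 2 * (deriv (deriv f) z) ^ 2 := by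
      field_simp
      ring
    rw [h3] at h2
    linarith
  have hf1cont : ContinuousOn (deriv f) U := hC1.continuousOn
  rcases (hdiffeo x hx).lt_or_gt with hneg | hposx
  · -- deriv f < 0 near x; apply the lemma to -f
    have hWopen : IsOpen (U ∩ deriv f ⁻¹' Iio 0) :=
      hf1cont.isOpen_inter_preimage hUopen isOpen_Iio
    obtain ⟨ε, hε, hball⟩ := Metric.isOpen_iff.1 hWopen x ⟨hx, hneg⟩
    refine ⟨Metric.ball x ε, Metric.ball_mem_nhds x hε, fun y hy => (hball hy).1, ?_⟩
    intro t₁ m₁ m₂ t₂ h01 h12 h23 hsub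
    rw [← crDistortion_neg f]
    refine key_crossratio_lemma (fun w => -f w) (fun w => -deriv f w)
      (fun w => -deriv (deriv f) w) (fun w => -deriv (deriv (deriv f)) w)
      (Metric.ball x ε) Metric.isOpen_ball (convex_ball x ε)
      (fun z hz => (hdf z (hball hz).1).neg)
      (fun z hz => (hdf1 z (hball hz).1).neg)
      (fun z hz => (hdf2 z (hball hz).1).neg)
      (fun z hz => by simpa using (hball hz).2)
      (fun z hz => by have := hSineq z (hball hz).1; nlinarith [this])
      t₁ m₁ m₂ t₂ h01 h12 h23 hsub
  · -- deriv f > 0 near x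
    have hWopen : IsOpen (U ∩ deriv f ⁻¹' Ioi 0) :=
      hf1cont.isOpen_inter_preimage hUopen isOpen_Ioi
    obtain ⟨ε, hε, hball⟩ := Metric.isOpen_iff.1 hWopen x ⟨hx, hposx⟩
    refine ⟨Metric.ball x ε, Metric.ball_mem_nhds x hε, fun y hy => (hball hy).1, ?_⟩
    intro t₁ m₁ m₂ t₂ h01 h12 h23 hsub
    refine key_crossratio_lemma f (deriv f) (deriv (deriv f)) (deriv (deriv (deriv f)))
      (Metric.ball x ε) Metric.isOpen_ball (convex_ball x ε)
      (fun z hz => hdf z (hball hz).1)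
      (fun z hz => hdf1 z (hball hz).1)
      (fun z hz => hdf2 z (hball hz).1)
      (fun z hz => (hball hz).2)
      (fun z hz => hSineq z (hball hz).1)
      t₁ m₁ m₂ t₂ h01 h12 h23 hsub

end
end

section
/- Let {Q_n}_{n≥0} be a fine grid on S^1 with fine grid constants a and ρ, and let I ⊂ S^1 be an interval with non-empty interior. Let n = n(I) be the smallest natural number such that I contains some atom Δ of Q_n. Then there exists an interval U ⊇ I such that: (i) U is the union of at most 2a atoms of Q_n; and (ii) |U| ≤ α^{−1}(1+ρ)|I|, where α = (a ρ^{a−1})^{−1}. -/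
open Set Filter MeasureTheory

noncomputable section

/-- A *fine grid*: a sequence of finite interval partitions of the circle `S¹ = ℝ/ℤ`,
encoded by ℤ-indexed, 1-periodic increasing sequences of division points on the real
line. `Q_n` has `m n` atoms, its atoms are `[pts n k, pts n (k+1)]`; `Q_0` is the
trivial partition, each `Q_{n+1}` strictly refines `Q_n`, each atom of `Q_n` is the
disjoint union of at most `a` atoms of `Q_{n+1}`, and adjacent atoms of `Q_n` have
`ρ`-comparable lengths. -/
structure FineGrid where
  /-- number of atoms of the partition `Q_n` -/
  m : ℕ → ℕ
  /-- division points of `Q_n`, as lifts -/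
  pts : ℕ → ℤ → ℝ
  m_pos : ∀ n, 0 < m n
  /-- `Q_0` is the trivial partition -/
  m_zero : m 0 = 1
  pts_mono : ∀ n, StrictMono (pts n)
  pts_periodic : ∀ n k, pts n (k + (m n : ℤ)) = pts n k + 1
  /-- the constant `a` -/
  a : ℕ
  two_le_a : 2 ≤ a
  /-- each `Q_{n+1}` is a strict refinement of `Q_n` -/
  strict_refines : ∀ n, m n < m (n + 1)
  /-- each atom of `Q_n` is the disjoint union of at least one and at most `a`
  consecutive atoms of `Q_{n+1}` -/
  refines : ∀ n k, ∃ k₁ k₂ : ℤ, pts (n + 1) k₁ = pts n k ∧ pts (n + 1) k₂ = pts n (k + 1) ∧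
    k₁ < k₂ ∧ k₂ - k₁ ≤ (a : ℤ)
  /-- the constant `ρ` -/
  rho : ℝ
  one_lt_rho : 1 < rho
  /-- adjacent atoms of `Q_n` have comparable lengths -/
  adj_comparable : ∀ n k,
    rho⁻¹ * (pts n (k + 1) - pts n k) ≤ pts n (k + 2) - pts n (k + 1) ∧
      pts n (k + 2) - pts n (k + 1) ≤ rho * (pts n (k + 1) - pts n k)

/-- The (arc of the) circle with lift `[x₁, x₂]` contains some atom of `Q_n`. -/
def ContainsAtom (Q : FineGrid) (n : ℕ) (x₁ x₂ : ℝ) : Prop :=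
  ∃ k j : ℤ, x₁ ≤ Q.pts n k + (j : ℝ) ∧ Q.pts n (k + 1) + (j : ℝ) ≤ x₂

namespace FineGrid

variable (Q : FineGrid)

lemma rho_pos : 0 < Q.rho := lt_trans one_pos Q.one_lt_rho

lemma one_le_rho : 1 ≤ Q.rho := Q.one_lt_rho.le

lemma pts_add_mul (n : ℕ) (k t : ℤ) : Q.pts n (k + t * (Q.m n : ℤ)) = Q.pts n k + t := by
  induction t using Int.induction_on with
  | zero => simp
  | succ i ih =>
      have h := Q.pts_periodic n (k + (i : ℤ) * (Q.m n : ℤ))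
      have e : k + ((i : ℤ) + 1) * (Q.m n : ℤ) = k + (i : ℤ) * (Q.m n : ℤ) + (Q.m n : ℤ) := by ring
      rw [e, h, ih]; push_cast; ring
  | pred i ih =>
      have h := Q.pts_periodic n (k + (-(i : ℤ) - 1) * (Q.m n : ℤ))
      have e : k + (-(i : ℤ) - 1) * (Q.m n : ℤ) + (Q.m n : ℤ) = k + (-(i : ℤ)) * (Q.m n : ℤ) := by
        ring
      rw [e, ih] at h
      push_cast at h ⊢
      linarith

lemma exists_floor (n : ℕ) (x : ℝ) :
    ∃ k : ℤ, Q.pts n k ≤ x ∧ ∀ z : ℤ, Q.pts n z ≤ x → z ≤ k := by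
  have hinh : ∃ z : ℤ, Q.pts n z ≤ x := by
    refine ⟨0 + ⌊x - Q.pts n 0⌋ * (Q.m n : ℤ), ?_⟩
    rw [Q.pts_add_mul]
    have := Int.floor_le (x - Q.pts n 0)
    linarith
  have hbdd : ∃ b : ℤ, ∀ z : ℤ, Q.pts n z ≤ x → z ≤ b := by
    refine ⟨0 + (⌈x - Q.pts n 0⌉ + 1) * (Q.m n : ℤ), fun z hz => ?_⟩
    have hb : x < Q.pts n (0 + (⌈x - Q.pts n 0⌉ + 1) * (Q.m n : ℤ)) := by
      rw [Q.pts_add_mul]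
      have := Int.le_ceil (x - Q.pts n 0)
      push_cast
      linarith
    exact le_of_lt ((Q.pts_mono n).lt_iff_lt.mp (lt_of_le_of_lt hz hb))
  exact Int.exists_greatest_of_bdd hbdd hinh

lemma exists_ceil (n : ℕ) (x : ℝ) :
    ∃ k : ℤ, x ≤ Q.pts n k ∧ ∀ z : ℤ, x ≤ Q.pts n z → k ≤ z := by
  have hinh : ∃ z : ℤ, x ≤ Q.pts n z := by
    refine ⟨0 + (⌈x - Q.pts n 0⌉ + 1) * (Q.m n : ℤ), ?_⟩
    rw [Q.pts_add_mul]
    have := Int.le_ceil (x - Q.pts n 0)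
    push_cast
    linarith
  have hbdd : ∃ b : ℤ, ∀ z : ℤ, x ≤ Q.pts n z → b ≤ z := by
    refine ⟨0 + (⌊x - Q.pts n 0⌋ - 1) * (Q.m n : ℤ), fun z hz => ?_⟩
    have hb : Q.pts n (0 + (⌊x - Q.pts n 0⌋ - 1) * (Q.m n : ℤ)) < x := by
      rw [Q.pts_add_mul]
      have := Int.floor_le (x - Q.pts n 0)
      push_cast
      linarith
    exact le_of_lt ((Q.pts_mono n).lt_iff_lt.mp (lt_of_lt_of_le hb hz))
  exact Int.exists_least_of_bdd hbdd hinh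

lemma containsAtom_iff (n : ℕ) (x₁ x₂ : ℝ) :
    ContainsAtom Q n x₁ x₂ ↔ ∃ k : ℤ, x₁ ≤ Q.pts n k ∧ Q.pts n (k + 1) ≤ x₂ := by
  constructor
  · rintro ⟨k, j, h1, h2⟩
    refine ⟨k + j * (Q.m n : ℤ), ?_, ?_⟩
    · rw [Q.pts_add_mul]; exact h1
    · have e : k + j * (Q.m n : ℤ) + 1 = (k + 1) + j * (Q.m n : ℤ) := by ring
      rw [e, Q.pts_add_mul]; exact h2
  · rintro ⟨k, h1, h2⟩
    exact ⟨k, 0, by simpa using h1, by simpa using h2⟩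

lemma len_pos (n : ℕ) (k : ℤ) : 0 < Q.pts n (k + 1) - Q.pts n k :=
  sub_pos.mpr (Q.pts_mono n (by omega))

lemma len_le_pow (n : ℕ) (d : ℕ) (i : ℤ) :
    Q.pts n (i + (d : ℤ) + 1) - Q.pts n (i + (d : ℤ)) ≤
      Q.rho ^ d * (Q.pts n (i + 1) - Q.pts n i) := by
  induction d with
  | zero => simp
  | succ d ih =>
      have h := (Q.adj_comparable n (i + (d : ℤ))).2
      have e1 : i + ((d : ℕ) + 1 : ℕ) = i + (d : ℤ) + 1 := by push_cast; ring
      rw [e1]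
      have e2 : i + (d : ℤ) + 1 + 1 = i + (d : ℤ) + 2 := by ring
      rw [e2]
      calc Q.pts n (i + (d : ℤ) + 2) - Q.pts n (i + (d : ℤ) + 1)
          ≤ Q.rho * (Q.pts n (i + (d : ℤ) + 1) - Q.pts n (i + (d : ℤ))) := h
        _ ≤ Q.rho * (Q.rho ^ d * (Q.pts n (i + 1) - Q.pts n i)) :=
            mul_le_mul_of_nonneg_left ih Q.rho_pos.le
        _ = Q.rho ^ (d + 1) * (Q.pts n (i + 1) - Q.pts n i) := by ring

lemma le_pow_len (n : ℕ) (d : ℕ) (i : ℤ) :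
    Q.pts n (i + 1) - Q.pts n i ≤
      Q.rho ^ d * (Q.pts n (i + (d : ℤ) + 1) - Q.pts n (i + (d : ℤ))) := by
  induction d with
  | zero => simp
  | succ d ih =>
      have h := (Q.adj_comparable n (i + (d : ℤ))).1
      have e1 : i + ((d : ℕ) + 1 : ℕ) = i + (d : ℤ) + 1 := by push_cast; ring
      rw [e1]
      have e2 : i + (d : ℤ) + 1 + 1 = i + (d : ℤ) + 2 := by ring
      rw [e2]
      have hρ := Q.rho_pos
      have hstep : Q.pts n (i + (d : ℤ) + 1) - Q.pts n (i + (d : ℤ)) ≤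
          Q.rho * (Q.pts n (i + (d : ℤ) + 2) - Q.pts n (i + (d : ℤ) + 1)) := by
        have h' := mul_le_mul_of_nonneg_left h hρ.le
        rw [← mul_assoc, mul_inv_cancel₀ (ne_of_gt hρ), one_mul] at h'
        exact h'
      calc Q.pts n (i + 1) - Q.pts n i
          ≤ Q.rho ^ d * (Q.pts n (i + (d : ℤ) + 1) - Q.pts n (i + (d : ℤ))) := ih
        _ ≤ Q.rho ^ d * (Q.rho * (Q.pts n (i + (d : ℤ) + 2) - Q.pts n (i + (d : ℤ) + 1))) :=
            mul_le_mul_of_nonneg_left hstep (pow_nonneg hρ.le d)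
        _ = Q.rho ^ (d + 1) * (Q.pts n (i + (d : ℤ) + 2) - Q.pts n (i + (d : ℤ) + 1)) := by ring

lemma len_comp (n : ℕ) (D : ℕ) (i p : ℤ) (h : |i - p| ≤ (D : ℤ)) :
    Q.pts n (i + 1) - Q.pts n i ≤ Q.rho ^ D * (Q.pts n (p + 1) - Q.pts n p) := by
  rw [abs_le] at h
  have hpow : ∀ d : ℕ, d ≤ D → Q.rho ^ d ≤ Q.rho ^ D := fun d hd =>
    pow_le_pow_right₀ Q.one_le_rho hd
  rcases le_total p i with hle | hle
  · set d := (i - p).toNat with hdd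
    have hd : i = p + (d : ℤ) := by omega
    have hdD : d ≤ D := by omega
    calc Q.pts n (i + 1) - Q.pts n i
        = Q.pts n (p + (d : ℤ) + 1) - Q.pts n (p + (d : ℤ)) := by rw [hd]
      _ ≤ Q.rho ^ d * (Q.pts n (p + 1) - Q.pts n p) := Q.len_le_pow n d p
      _ ≤ Q.rho ^ D * (Q.pts n (p + 1) - Q.pts n p) :=
          mul_le_mul_of_nonneg_right (hpow d hdD) (Q.len_pos n p).le
  · set d := (p - i).toNat with hdd
    have hd : p = i + (d : ℤ) := by omega
    have hdD : d ≤ D := by omega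
    calc Q.pts n (i + 1) - Q.pts n i
        ≤ Q.rho ^ d * (Q.pts n (i + (d : ℤ) + 1) - Q.pts n (i + (d : ℤ))) := Q.le_pow_len n d i
      _ = Q.rho ^ d * (Q.pts n (p + 1) - Q.pts n p) := by rw [hd]
      _ ≤ Q.rho ^ D * (Q.pts n (p + 1) - Q.pts n p) :=
          mul_le_mul_of_nonneg_right (hpow d hdD) (Q.len_pos n p).le

lemma pts_sub_le_of_len_le (n : ℕ) (k : ℤ) (c : ℕ) (M : ℝ)
    (h : ∀ i : ℤ, k ≤ i → i < k + (c : ℤ) → Q.pts n (i + 1) - Q.pts n i ≤ M) :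
    Q.pts n (k + (c : ℤ)) - Q.pts n k ≤ (c : ℝ) * M := by
  induction c with
  | zero => simp
  | succ c ih =>
      have h1 := h (k + (c : ℤ)) (by omega) (by push_cast; omega)
      have h2 := ih (fun i hi hi' => h i hi (by push_cast; omega))
      have e : k + ((c : ℕ) + 1 : ℕ) = (k + (c : ℤ)) + 1 := by push_cast; ring
      rw [e]
      push_cast
      linarith

lemma pts_zero_succ (k : ℤ) : Q.pts 0 (k + 1) = Q.pts 0 k + 1 := by
  have h := Q.pts_periodic 0 k
  rw [Q.m_zero] at h
  simpa using h

end FineGrid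

/-- Let `{Q_n}` be a fine grid with constants `a, ρ`, let `I = [x₁, x₂]`
be an interval of the circle with non-empty interior, and let `n = n(I)` be smallest such
that `I` contains an atom of `Q_n`. Then there is an interval `U ⊇ I` which is the union
of at most `2a` atoms of `Q_n` and with `|U| ≤ α⁻¹ (1 + ρ) |I|`, where
`α = (a ρ^{a-1})⁻¹`. -/
theorem interval_contained_in_few_atoms
    (Q : FineGrid) (x₁ x₂ : ℝ) (hx : x₁ < x₂) (hx' : x₂ ≤ x₁ + 1)
    (n : ℕ) (hn : ContainsAtom Q n x₁ x₂)
    (hmin : ∀ n' : ℕ, n' < n → ¬ContainsAtom Q n' x₁ x₂) :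
    ∃ (k j : ℤ) (cnt : ℕ), 1 ≤ cnt ∧ cnt ≤ 2 * Q.a ∧
      Q.pts n k + (j : ℝ) ≤ x₁ ∧ x₂ ≤ Q.pts n (k + (cnt : ℤ)) + (j : ℝ) ∧
      Q.pts n (k + (cnt : ℤ)) - Q.pts n k ≤
        ((Q.a : ℝ) * Q.rho ^ (Q.a - 1)) * (1 + Q.rho) * (x₂ - x₁) := by
  have ha2 : 2 ≤ Q.a := Q.two_le_a
  have hρ1 : 1 ≤ Q.rho := Q.one_le_rho
  have hρ0 : 0 < Q.rho := Q.rho_pos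
  have hpow1 : (1 : ℝ) ≤ Q.rho ^ (Q.a - 1) := one_le_pow₀ hρ1
  obtain _ | n' := n
  · -- n = 0 : the trivial partition, atoms have length 1
    obtain ⟨q, hq1, hq2⟩ := (Q.containsAtom_iff 0 x₁ x₂).mp hn
    rw [Q.pts_zero_succ] at hq2
    have hI1 : (1 : ℝ) ≤ x₂ - x₁ := by linarith
    obtain ⟨k₀, hk₀, hk₀max⟩ := Q.exists_floor 0 x₁
    have hk₁ : x₁ < Q.pts 0 (k₀ + 1) := by
      by_contra hc
      push_neg at hc
      have := hk₀max (k₀ + 1) hc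
      omega
    rw [Q.pts_zero_succ] at hk₁
    refine ⟨k₀, 0, 2, one_le_two, by omega, by simpa using hk₀, ?_, ?_⟩
    · have e : k₀ + ((2 : ℕ) : ℤ) = (k₀ + 1) + 1 := by push_cast; ring
      rw [e, Q.pts_zero_succ, Q.pts_zero_succ]
      push_cast
      linarith
    · have e : k₀ + ((2 : ℕ) : ℤ) = (k₀ + 1) + 1 := by push_cast; ring
      rw [e, Q.pts_zero_succ, Q.pts_zero_succ]
      have haR : (2 : ℝ) ≤ (Q.a : ℝ) := by exact_mod_cast ha2
      have hA2 : (2 : ℝ) ≤ (Q.a : ℝ) * Q.rho ^ (Q.a - 1) := by nlinarith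
      have h2ρ : (2 : ℝ) ≤ 1 + Q.rho := by linarith
      have h4 : (4 : ℝ) ≤ ((Q.a : ℝ) * Q.rho ^ (Q.a - 1)) * (1 + Q.rho) := by nlinarith
      have h5 : (4 : ℝ) * 1 ≤ ((Q.a : ℝ) * Q.rho ^ (Q.a - 1)) * (1 + Q.rho) * (x₂ - x₁) :=
        mul_le_mul h4 hI1 zero_le_one (by linarith)
      linarith
  · -- n = n' + 1
    set n := n' + 1 with hn_def
    have hC : ¬ContainsAtom Q n' x₁ x₂ := hmin n' (by omega)
    rw [Q.containsAtom_iff] at hC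
    push_neg at hC
    -- floor/ceil at level n
    obtain ⟨km, hkm, hkmmax⟩ := Q.exists_floor n x₁
    obtain ⟨kp, hkp, hkpmin⟩ := Q.exists_ceil n x₂
    -- floor at level n'
    obtain ⟨l, hl, hlmax⟩ := Q.exists_floor n' x₁
    have hl1 : x₁ < Q.pts n' (l + 1) := by
      by_contra hc
      push_neg at hc
      have := hlmax (l + 1) hc
      omega
    have hl2 : x₂ < Q.pts n' (l + 1 + 1) := hC (l + 1) hl1.le
    -- refinement structure
    obtain ⟨r₁, r₂, hr₁, hr₂, hr12, hr12a⟩ := Q.refines n' l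
    obtain ⟨r₂', r₃, hr₂', hr₃, hr23, hr23a⟩ := Q.refines n' (l + 1)
    have hr₂eq : r₂' = r₂ := (Q.pts_mono n).injective (by rw [hr₂', hr₂])
    rw [hr₂eq] at hr₂' hr23 hr23a
    -- the atom of Q_n inside I
    obtain ⟨p, hp1, hp2⟩ := (Q.containsAtom_iff n x₁ x₂).mp hn
    have hlenp : Q.pts n (p + 1) - Q.pts n p ≤ x₂ - x₁ := by linarith
    -- comparisons of indices
    have hr₁k : r₁ ≤ km := hkmmax r₁ (by rw [hr₁]; exact hl)
    have hkr₃ : kp ≤ r₃ := hkpmin r₃ (by rw [hr₃]; exact hl2.le)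
    have hr₁p : r₁ ≤ p := by
      have : Q.pts n r₁ ≤ Q.pts n p := by rw [hr₁]; linarith
      exact (Q.pts_mono n).le_iff_le.mp this
    have hpr₃ : p + 1 < r₃ ∨ p + 1 = r₃ := by
      have : Q.pts n (p + 1) < Q.pts n r₃ := by rw [hr₃]; linarith
      have := (Q.pts_mono n).lt_iff_lt.mp this
      omega
    have hpr₃' : p + 1 ≤ r₃ := by omega
    have hkmk : km < kp := by
      have : Q.pts n km < Q.pts n kp := by linarith
      exact (Q.pts_mono n).lt_iff_lt.mp this
    set cnt : ℕ := (kp - km).toNat with hcnt_def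
    have hcntZ : (cnt : ℤ) = kp - km := by omega
    have hcnt1 : 1 ≤ cnt := by omega
    have hcnt2a : cnt ≤ 2 * Q.a := by omega
    have hkcnt : km + (cnt : ℤ) = kp := by omega
    -- |U| ≤ |Δ*₁| + |Δ*₂|
    have hU1 : Q.pts n r₁ ≤ Q.pts n km := (Q.pts_mono n).le_iff_le.mpr hr₁k
    have hU2 : Q.pts n kp ≤ Q.pts n r₃ := (Q.pts_mono n).le_iff_le.mpr hkr₃
    set Δ₁ : ℝ := Q.pts n' (l + 1) - Q.pts n' l with hΔ₁def
    set Δ₂ : ℝ := Q.pts n' (l + 1 + 1) - Q.pts n' (l + 1) with hΔ₂def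
    have hΔ₁pos : 0 < Δ₁ := Q.len_pos n' l
    have hΔ₂pos : 0 < Δ₂ := Q.len_pos n' (l + 1)
    have hadj := Q.adj_comparable n' l
    have hΔ₂ρ : Δ₂ ≤ Q.rho * Δ₁ := by
      have := hadj.2
      have e : l + 2 = l + 1 + 1 := by ring
      rw [e] at this
      exact this
    have hΔ₁ρ : Δ₁ ≤ Q.rho * Δ₂ := by
      have h1 := hadj.1
      have e : l + 2 = l + 1 + 1 := by ring
      rw [e] at h1
      have h' := mul_le_mul_of_nonneg_left h1 hρ0.le
      rw [← mul_assoc, mul_inv_cancel₀ (ne_of_gt hρ0), one_mul] at h'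
      exact h'
    have hUlen : Q.pts n kp - Q.pts n km ≤ Δ₁ + Δ₂ := by
      have e1 : Q.pts n r₁ = Q.pts n' l := hr₁
      have e3 : Q.pts n r₃ = Q.pts n' (l + 1 + 1) := hr₃
      simp only [hΔ₁def, hΔ₂def]
      linarith [hU1, hU2, e1 ▸ hU1, e3 ▸ hU2]
    set A : ℝ := (Q.a : ℝ) * Q.rho ^ (Q.a - 1) with hAdef
    have hApos : 0 < A := by
      have : (0 : ℝ) < (Q.a : ℝ) := by positivity
      positivity
    set lenp : ℝ := Q.pts n (p + 1) - Q.pts n p with hlenpdef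
    have hlenppos : 0 < lenp := Q.len_pos n p
    -- key bound: min(Δ₁, Δ₂) side containing p is ≤ A * lenp
    have key : Q.pts n kp - Q.pts n km ≤ A * (1 + Q.rho) * lenp := by
      rcases lt_or_ge p r₂ with hpA | hpB
      · -- p's atom is in Δ*₁ : r₁ ≤ p ≤ r₂ - 1
        have hΔ₁bound : Δ₁ ≤ A * lenp := by
          set c₁ : ℕ := (r₂ - r₁).toNat with hc₁def
          have hc₁ : r₁ + (c₁ : ℤ) = r₂ := by omega
          have hc₁a : (c₁ : ℝ) ≤ (Q.a : ℝ) := by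
            have : (c₁ : ℤ) ≤ (Q.a : ℤ) := by omega
            exact_mod_cast this
          have hsum := Q.pts_sub_le_of_len_le n r₁ c₁ (Q.rho ^ (Q.a - 1) * lenp)
            (fun i hi hi' => by
              apply Q.len_comp n (Q.a - 1) i p
              rw [abs_le]
              constructor <;> omega)
          rw [hc₁, hr₁, hr₂] at hsum
          calc Δ₁ ≤ (c₁ : ℝ) * (Q.rho ^ (Q.a - 1) * lenp) := hsum
            _ ≤ (Q.a : ℝ) * (Q.rho ^ (Q.a - 1) * lenp) :=
                mul_le_mul_of_nonneg_right hc₁a (by positivity)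
            _ = A * lenp := by rw [hAdef]; ring
        calc Q.pts n kp - Q.pts n km ≤ Δ₁ + Δ₂ := hUlen
          _ ≤ Δ₁ + Q.rho * Δ₁ := by linarith
          _ = (1 + Q.rho) * Δ₁ := by ring
          _ ≤ (1 + Q.rho) * (A * lenp) :=
              mul_le_mul_of_nonneg_left hΔ₁bound (by linarith)
          _ = A * (1 + Q.rho) * lenp := by ring
      · -- p's atom is in Δ*₂ : r₂ ≤ p ≤ r₃ - 1
        have hΔ₂bound : Δ₂ ≤ A * lenp := by
          set c₂ : ℕ := (r₃ - r₂).toNat with hc₂def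
          have hc₂ : r₂ + (c₂ : ℤ) = r₃ := by omega
          have hc₂a : (c₂ : ℝ) ≤ (Q.a : ℝ) := by
            have : (c₂ : ℤ) ≤ (Q.a : ℤ) := by omega
            exact_mod_cast this
          have hsum := Q.pts_sub_le_of_len_le n r₂ c₂ (Q.rho ^ (Q.a - 1) * lenp)
            (fun i hi hi' => by
              apply Q.len_comp n (Q.a - 1) i p
              rw [abs_le]
              constructor <;> omega)
          rw [hc₂, hr₂', hr₃] at hsum
          calc Δ₂ ≤ (c₂ : ℝ) * (Q.rho ^ (Q.a - 1) * lenp) := hsum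
            _ ≤ (Q.a : ℝ) * (Q.rho ^ (Q.a - 1) * lenp) :=
                mul_le_mul_of_nonneg_right hc₂a (by positivity)
            _ = A * lenp := by rw [hAdef]; ring
        calc Q.pts n kp - Q.pts n km ≤ Δ₁ + Δ₂ := hUlen
          _ ≤ Q.rho * Δ₂ + Δ₂ := by linarith
          _ = (1 + Q.rho) * Δ₂ := by ring
          _ ≤ (1 + Q.rho) * (A * lenp) :=
              mul_le_mul_of_nonneg_left hΔ₂bound (by linarith)
          _ = A * (1 + Q.rho) * lenp := by ring
    refine ⟨km, 0, cnt, hcnt1, hcnt2a, by simpa using hkm, ?_, ?_⟩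
    · rw [hkcnt]
      simpa using hkp
    · rw [hkcnt]
      calc Q.pts n kp - Q.pts n km ≤ A * (1 + Q.rho) * lenp := key
        _ ≤ A * (1 + Q.rho) * (x₂ - x₁) :=
            mul_le_mul_of_nonneg_left hlenp (by positivity)
end
end
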